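/- Let ω ∈ K[x₁,x₂] be monic in x₂, ρ ∈ K[x₁,x₂], and let I ⊂ K[x₁,x₂,x₃] be an ideal containing ω and (∂ω/∂x₂)·x₃ − ρ. Suppose y ∈ ℂ̄[[x₁−α]] satisfies ω(x₁, y) ≡ 0 and ∂ω/∂x₂(x₁, y) is not identically zero, and set z = ρ(x₁,y)/∂ω/∂x₂(x₁,y). Then for every h ∈ I ∩ K[x₁,x₂,x₃] with the property that I ∩ K[x₁,x₂] = (ω), we have h(x₁, y, z) = 0 in the fraction field of ℂ̄[[x₁−α]]. -/

import Mathlib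

open Polynomial

noncomputable def d2 {K : Type} [CommRing K] (ω : Polynomial (Polynomial K)) :
    Polynomial (Polynomial K) :=
  Polynomial.derivative ω

/-- The inclusion `K[x₁][x₂] → K[x₁,x₂,x₃]` sending `x₁ ↦ X 0`, `x₂ ↦ X 1`. -/
noncomputable def toMv3 {K : Type} [CommRing K] :
    Polynomial (Polynomial K) →+* MvPolynomial (Fin 3) K :=
  Polynomial.eval₂RingHom
    (Polynomial.eval₂RingHom (MvPolynomial.C : K →+* MvPolynomial (Fin 3) K)
      (MvPolynomial.X 0))
    (MvPolynomial.X 1)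

/-- Substitution `x₁ ↦ α + t`, `x₂ ↦ y` of a bivariate polynomial into `K[[t]]`. -/
noncomputable def substSeries {K : Type} [CommRing K] (α : K) (y : PowerSeries K)
    (p : Polynomial (Polynomial K)) : PowerSeries K :=
  Polynomial.eval₂
    (Polynomial.aeval (PowerSeries.X + PowerSeries.C (R := K) α) :
      Polynomial K →ₐ[K] PowerSeries K).toRingHom y p

section Aux
variable {K : Type} [CommRing K]

lemma toMv3_CC (a : K) : toMv3 (Polynomial.C (Polynomial.C a)) = MvPolynomial.C a := by
  simp [toMv3]

lemma toMv3_CX : toMv3 (Polynomial.C (Polynomial.X : Polynomial K)) = MvPolynomial.X 0 := by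
  simp [toMv3]

lemma toMv3_X : toMv3 (Polynomial.X : Polynomial (Polynomial K)) = MvPolynomial.X 1 := by
  simp [toMv3]

lemma pseudo (c ρ : Polynomial (Polynomial K)) (h : MvPolynomial (Fin 3) K) :
    ∃ (m : ℕ) (u : MvPolynomial (Fin 3) K) (r : Polynomial (Polynomial K)),
      (toMv3 c) ^ m * h = u * (toMv3 c * MvPolynomial.X 2 - toMv3 ρ) + toMv3 r := by
  induction h using MvPolynomial.induction_on with
  | C a =>
      exact ⟨0, 0, Polynomial.C (Polynomial.C a), by simp [toMv3_CC]⟩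
  | add p q hp hq =>
      obtain ⟨m, u, r, hm⟩ := hp
      obtain ⟨n, v, s, hn⟩ := hq
      refine ⟨m + n, (toMv3 c) ^ n * u + (toMv3 c) ^ m * v, c ^ n * r + c ^ m * s, ?_⟩
      rw [map_add, map_mul, map_mul, map_pow, map_pow, pow_add]
      linear_combination (toMv3 c) ^ n * hm + (toMv3 c) ^ m * hn
  | mul_X p i hp =>
      obtain ⟨m, u, r, hm⟩ := hp
      have hi : i = 0 ∨ i = 1 ∨ i = 2 := by omega
      rcases hi with rfl | rfl | rfl
      · refine ⟨m, u * MvPolynomial.X 0, r * Polynomial.C Polynomial.X, ?_⟩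
        rw [map_mul, toMv3_CX]
        linear_combination (MvPolynomial.X 0 : MvPolynomial (Fin 3) K) * hm
      · refine ⟨m, u * MvPolynomial.X 1, r * Polynomial.X, ?_⟩
        rw [map_mul, toMv3_X]
        linear_combination (MvPolynomial.X 1 : MvPolynomial (Fin 3) K) * hm
      · refine ⟨m + 1, toMv3 c * MvPolynomial.X 2 * u + toMv3 r, r * ρ, ?_⟩
        rw [map_mul, pow_succ]
        linear_combination (toMv3 c * MvPolynomial.X 2) * hm

end Aux


/-- Let `ω ∈ K[x₁,x₂]` be monic in `x₂`, `ρ ∈ K[x₁,x₂]`, and let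
`I ⊆ K[x₁,x₂,x₃]` be an ideal containing `ω` and `(∂ω/∂x₂)·x₃ − ρ`, with
`I ∩ K[x₁,x₂] = (ω)`.  If `y ∈ K[[x₁−α]]` satisfies `ω(x₁,y) = 0` and `∂ω/∂x₂(x₁,y) ≠ 0`,
and `z = ρ(x₁,y)/(∂ω/∂x₂)(x₁,y)` in the fraction field (Laurent series), then every `h ∈ I`
satisfies `h(x₁, y, z) = 0` there. -/
theorem branch_lifts_to_ideal_zero
    (K : Type) [Field K] [IsAlgClosed K] [CharZero K]
    (ω ρ : Polynomial (Polynomial K)) (hmonic : ω.Monic)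
    (I : Ideal (MvPolynomial (Fin 3) K))
    (hIω : toMv3 ω ∈ I)
    (hIrel : toMv3 (d2 ω) * MvPolynomial.X 2 - toMv3 ρ ∈ I)
    (hcap : ∀ f : Polynomial (Polynomial K), toMv3 f ∈ I ↔ ω ∣ f)
    (α : K) (y : PowerSeries K)
    (hω : substSeries α y ω = 0)
    (hd : substSeries α y (d2 ω) ≠ 0)
    (h : MvPolynomial (Fin 3) K) (hh : h ∈ I) :
    MvPolynomial.aeval
        (fun i : Fin 3 =>
          if i = 0 then
            algebraMap (PowerSeries K) (LaurentSeries K) (PowerSeries.X + PowerSeries.C (R := K) α)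
          else if i = 1 then algebraMap (PowerSeries K) (LaurentSeries K) y
          else
            algebraMap (PowerSeries K) (LaurentSeries K) (substSeries α y ρ) /
              algebraMap (PowerSeries K) (LaurentSeries K) (substSeries α y (d2 ω)))
        h = 0 := by
  set A := algebraMap (PowerSeries K) (LaurentSeries K) with hA
  set f : Fin 3 → LaurentSeries K := fun i : Fin 3 =>
          if i = 0 then A (PowerSeries.X + PowerSeries.C (R := K) α)
          else if i = 1 then A y
          else A (substSeries α y ρ) / A (substSeries α y (d2 ω)) with hf
  show MvPolynomial.aeval f h = 0
  set Φ : MvPolynomial (Fin 3) K →+* LaurentSeries K := (MvPolynomial.aeval f).toRingHom with hΦ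
  have hΦapp : ∀ p, Φ p = MvPolynomial.aeval f p := fun _ => rfl
  have hAinj : Function.Injective A := IsFractionRing.injective _ _
  have hDne : A (substSeries α y (d2 ω)) ≠ 0 := by
    intro hc
    exact hd (hAinj (by simpa using hc))
  -- Φ ∘ toMv3 agrees with A ∘ substSeries
  have hcomm : ∀ p : Polynomial (Polynomial K), Φ (toMv3 p) = A (substSeries α y p) := by
    intro p
    have key : Φ.comp toMv3 =
        A.comp (Polynomial.eval₂RingHom
          (Polynomial.aeval (PowerSeries.X + PowerSeries.C (R := K) α) :
            Polynomial K →ₐ[K] PowerSeries K).toRingHom y) := by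
      apply Polynomial.ringHom_ext'
      · apply Polynomial.ringHom_ext'
        · ext a
          simp [toMv3_CC, hΦapp, MvPolynomial.algebraMap_eq, hA, HahnSeries.C_apply, algebraMap]
        · simp [toMv3_CX, hΦapp, hf]
      · simp [toMv3_X, hΦapp, hf]
    exact RingHom.congr_fun key p
  obtain ⟨m, u, r, heq⟩ := pseudo (d2 ω) ρ h
  have hrI : toMv3 r ∈ I := by
    have hr' : toMv3 r = (toMv3 (d2 ω)) ^ m * h -
        u * (toMv3 (d2 ω) * MvPolynomial.X 2 - toMv3 ρ) := by linear_combination -heq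
    rw [hr']
    exact sub_mem (I.mul_mem_left _ hh) (I.mul_mem_left _ hIrel)
  obtain ⟨q, hq⟩ := (hcap r).mp hrI
  have hrzero : A (substSeries α y r) = 0 := by
    rw [hq]
    have : substSeries α y (ω * q) = substSeries α y ω * substSeries α y q :=
      Polynomial.eval₂_mul _ _
    rw [this, hω, zero_mul, map_zero]
  have hmain := congrArg Φ heq
  rw [map_add, map_mul, map_mul, map_pow, map_sub, map_mul] at hmain
  rw [hcomm, hcomm, hcomm, hrzero] at hmain
  have hX2 : Φ (MvPolynomial.X 2) = A (substSeries α y ρ) / A (substSeries α y (d2 ω)) := by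
    simp [hΦapp, hf]
  rw [hX2] at hmain
  have hcancel : A (substSeries α y (d2 ω)) *
      (A (substSeries α y ρ) / A (substSeries α y (d2 ω))) - A (substSeries α y ρ) = 0 := by
    field_simp
    simp
  rw [hcancel, mul_zero, zero_add] at hmain
  have := mul_eq_zero.mp hmain
  rcases this with hc | hc
  · exact absurd hc (pow_ne_zero _ hDne)
  · exact hc
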